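/- Let (M,d) be a proper metric space, μ ∈ P₁(M) with μ(B̄(a,ρ)) = α > 1/2. Then every Fréchet median of μ lies in the closed ball B̄(a, 2αρ/(2α−1)). -/

import Mathlib

open MeasureTheory Metric

/-- If `μ(B̄(a,ρ)) = α > 1/2`, then every Fréchet median of `μ` lies in
the closed ball `B̄(a, 2αρ/(2α−1))`. -/
theorem frechet_medians_in_enlarged_ball
    {M : Type*} [MetricSpace M] [ProperSpace M]
    [MeasurableSpace M] [BorelSpace M]
    (μ : Measure M) [IsProbabilityMeasure μ]
    (x₀ : M) (hmom : Integrable (fun p => dist x₀ p) μ)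
    (a : M) (ρ : ℝ) (hρ : 0 < ρ)
    (α : ℝ) (hα : 1 / 2 < α)
    (hmass : μ (closedBall a ρ) = ENNReal.ofReal α)
    (x : M) (hx : ∀ y : M, (∫ p, dist x p ∂μ) ≤ ∫ p, dist y p ∂μ) :
    x ∈ closedBall a (2 * α * ρ / (2 * α - 1)) := by
  have hα0 : (0:ℝ) < α := lt_trans (by norm_num) hα
  have hB : MeasurableSet (closedBall a ρ) := measurableSet_closedBall
  have hint : ∀ y : M, Integrable (fun p => dist y p) μ := by
    intro y
    refine Integrable.mono' ((integrable_const (dist y x₀)).add hmom)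
      ((Continuous.dist continuous_const continuous_id).aestronglyMeasurable)
      (ae_of_all _ fun p => ?_)
    simp only [Real.norm_eq_abs, abs_of_nonneg dist_nonneg]
    exact dist_triangle y x₀ p
  set g : M → ℝ := fun p => dist x p - dist a p with hg
  have hgint : Integrable g μ := (hint x).sub (hint a)
  have hle : ∫ p, g p ∂μ ≤ 0 := by
    rw [hg]
    rw [integral_sub (hint x) (hint a)]
    linarith [hx a]
  set D := dist a x with hD
  have hα1 : α ≤ 1 := by
    have h1 : ENNReal.ofReal α ≤ 1 := hmass ▸ prob_le_one
    exact_mod_cast (ENNReal.ofReal_le_one).mp h1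
  have hmassR : (μ (closedBall a ρ)).toReal = α := by
    rw [hmass, ENNReal.toReal_ofReal hα0.le]
  have hcompl : (μ (closedBall a ρ)ᶜ).toReal = 1 - α := by
    rw [measure_compl hB (measure_ne_top μ _), measure_univ, hmass,
      ENNReal.toReal_sub_of_le (hmass ▸ prob_le_one) (by simp),
      ENNReal.toReal_ofReal hα0.le, ENNReal.toReal_one]
  have hlb1 : (D - 2 * ρ) * (μ (closedBall a ρ)).toReal ≤ ∫ p in closedBall a ρ, g p ∂μ := by
    refine setIntegral_ge_of_const_le_real hB (measure_ne_top μ _) (fun p hp => ?_)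
      hgint.integrableOn
    have hpa : dist a p ≤ ρ := by rwa [dist_comm, ← mem_closedBall]
    have htri : D ≤ dist a p + dist x p := by
      rw [hD, dist_comm x p]; exact dist_triangle a p x
    simp only [hg]
    linarith
  have hlb2 : (-D) * (μ (closedBall a ρ)ᶜ).toReal ≤ ∫ p in (closedBall a ρ)ᶜ, g p ∂μ := by
    refine setIntegral_ge_of_const_le_real hB.compl (measure_ne_top μ _) (fun p hp => ?_)
      hgint.integrableOn
    have htri : dist a p ≤ D + dist x p := dist_triangle a x p
    simp only [hg]
    linarith
  have hsplit : (∫ p in closedBall a ρ, g p ∂μ) + ∫ p in (closedBall a ρ)ᶜ, g p ∂μ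
      = ∫ p, g p ∂μ := integral_add_compl hB hgint
  have hkey : (D - 2 * ρ) * α + (-D) * (1 - α) ≤ 0 := by
    rw [← hcompl, ← hmassR]
    linarith [hlb1, hlb2, hsplit, hle]
  have h2 : (0:ℝ) < 2 * α - 1 := by linarith
  have : D ≤ 2 * α * ρ / (2 * α - 1) := by
    rw [le_div_iff₀ h2]; nlinarith
  rwa [mem_closedBall, dist_comm]
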